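/- Let α ∈ ℝ be irrational and not badly approximable (i.e. liminf_{q→∞} q·‖qα‖ = 0, where ‖x‖ denotes the distance from x to the nearest integer). For the sequence ω = ({jα})_{j≥1} of fractional parts in [0,1], there exists a positive function ψ : ℕ → ℝ_+ such that Σ_{j=1}^∞ ψ(j) = ∞ and λ(W_ω(ψ)) < 1. -/

import Mathlib

open MeasureTheory Filter Set Metric
open scoped ENNReal NNReal

noncomputable section

/-- `W_ω(ψ)`: points of `[0,1]` with `|x - ω j| < ψ j` for infinitely many `j`. -/
def W1 (ω : ℕ → ℝ) (ψ : ℕ → ℝ) : Set ℝ :=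
  {x | x ∈ Set.Icc (0 : ℝ) 1 ∧ ∃ᶠ j in Filter.atTop, |x - ω j| < ψ j}

open Classical in
/-- `A(R; N, ω)`: the number of indices `1 ≤ j ≤ N` with `ω j ∈ R`. -/
def countIn1 (ω : ℕ → ℝ) (R : Set ℝ) (N : ℕ) : ℕ :=
  ((Finset.Icc 1 N).filter fun j => ω j ∈ R).card

/-- The discrepancy `D_N(ω)` of a sequence in `[0,1]`: supremum over intervals
`[a,b) ⊆ [0,1]` of `|A([a,b);N,ω)/N - (b - a)|`. -/
def Disc1 (ω : ℕ → ℝ) (N : ℕ) : ℝ :=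
  sSup {d | ∃ a b : ℝ, 0 ≤ a ∧ a < b ∧ b ≤ 1 ∧
    d = |(countIn1 ω (Set.Ico a b) N : ℝ) / N - (b - a)|}

/-- `ω` is uniformly distributed on `[0,1]`. -/
def IsUD1 (ω : ℕ → ℝ) : Prop :=
  ∀ a b : ℝ, 0 ≤ a → a < b → b ≤ 1 →
    Filter.Tendsto (fun N => (countIn1 ω (Set.Ico a b) N : ℝ) / N)
      Filter.atTop (nhds (b - a))

/-- Via Dirichlet's theorem: there are arbitrarily large `q` with `q‖qα‖ ≤ 1`;
in particular the approximation function is cobounded from below. -/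
lemma hfle (α : ℝ) (hα : Irrational α) (N : ℕ) (hN1 : 1 ≤ N) :
    ∃ q : ℕ, N ≤ q ∧ (q : ℝ) * |(q : ℝ) * α - (round ((q : ℝ) * α) : ℤ)| ≤ 1 := by
  classical
  set g : ℕ → ℝ := fun k => |(k : ℝ) * α - (round ((k : ℝ) * α) : ℤ)| with hg
  have hne : (Finset.Icc 1 N).Nonempty := ⟨1, Finset.mem_Icc.mpr ⟨le_refl 1, hN1⟩⟩
  have hgpos : ∀ k ∈ Finset.Icc 1 N, 0 < g k := by
    intro k hk
    have hk1 : 1 ≤ k := (Finset.mem_Icc.mp hk).1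
    have hirr : Irrational ((k : ℝ) * α) := hα.natCast_mul (by omega)
    exact abs_pos.mpr (sub_ne_zero.mpr (hirr.ne_int _))
  set δ := (Finset.Icc 1 N).inf' hne g with hδ
  have hδpos : 0 < δ := (Finset.lt_inf'_iff hne).mpr hgpos
  obtain ⟨n₀, hn₀⟩ := exists_nat_gt (1 / δ)
  set n := max n₀ N with hn
  have hnN : N ≤ n := le_max_right _ _
  have hnpos : 0 < n := lt_of_lt_of_le hN1 hnN
  have hnδ : 1 / ((n : ℝ) + 1) < δ := by
    have h1 : (1 : ℝ) / δ < (n : ℝ) + 1 := by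
      have : (n₀ : ℝ) ≤ (n : ℝ) := by exact_mod_cast le_max_left n₀ N
      linarith
    rw [div_lt_iff₀ (by positivity)] at *
    nlinarith [hδpos]
  obtain ⟨k, hk0, hkn, hkle⟩ := Real.exists_nat_abs_mul_sub_round_le α hnpos
  have hkN : N < k := by
    by_contra h
    push_neg at h
    have hkmem : k ∈ Finset.Icc 1 N := Finset.mem_Icc.mpr ⟨hk0, h⟩
    have := Finset.inf'_le g hkmem
    rw [← hδ] at this
    have : δ ≤ 1 / ((n : ℝ) + 1) := le_trans this hkle
    linarith
  refine ⟨k, le_of_lt hkN, ?_⟩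
  have hk' : (k : ℝ) ≤ (n : ℝ) := by exact_mod_cast hkn
  calc (k : ℝ) * |(k : ℝ) * α - (round ((k : ℝ) * α) : ℤ)|
      ≤ (n : ℝ) * (1 / ((n : ℝ) + 1)) :=
        mul_le_mul hk' hkle (abs_nonneg _) (Nat.cast_nonneg n)
    _ ≤ 1 := by
        rw [mul_one_div]
        exact div_le_one_of_le₀ (by linarith) (by positivity)

lemma hcb (α : ℝ) (hα : Irrational α) :
    Filter.IsCoboundedUnder (· ≥ ·)  Filter.atTop
      (fun q : ℕ => (q : ℝ) * |(q : ℝ) * α - (round ((q : ℝ) * α) : ℤ)|) := by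
  refine ⟨1, fun a ha => ?_⟩
  rw [Filter.eventually_map] at ha
  obtain ⟨N, hN⟩ := Filter.eventually_atTop.mp ha
  obtain ⟨q', hq'N, hq'le⟩ := hfle α hα (max N 1) (le_max_right _ _)
  exact le_trans (hN q' (le_trans (le_max_left _ _) hq'N)) hq'le

/-- Remark (via Kurzweil's theorem): for an irrational, not badly approximable `α`,
there is a positive `ψ` with divergent series for which `W_{({jα})}(ψ)` does not
have full measure. -/
theorem stmt_16 (α : ℝ) (hα : Irrational α)
    (hnba : Filter.liminf
      (fun q : ℕ => (q : ℝ) * |(q : ℝ) * α - (round ((q : ℝ) * α) : ℤ)|)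
      Filter.atTop = 0) :
    ∃ ψ : ℕ → ℝ, (∀ j, 0 < ψ j) ∧ ¬ Summable ψ ∧
      volume (W1 (fun j => Int.fract (j * α)) ψ) < 1 := by
  classical
  set f : ℕ → ℝ := fun q => (q : ℝ) * |(q : ℝ) * α - (round ((q : ℝ) * α) : ℤ)| with hfdef
  have hf0 : ∀ q, 0 ≤ f q := fun q => mul_nonneg (Nat.cast_nonneg q) (abs_nonneg _)
  have hfreq : ∀ k : ℕ, ∃ q : ℕ, k + 1 ≤ q ∧ f q < (1/2 : ℝ)^k * (1/2:ℝ)^k := by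
    intro k
    have hpos : (0:ℝ) < (1/2:ℝ)^k * (1/2:ℝ)^k := by positivity
    have hlt : Filter.liminf f Filter.atTop < (1/2:ℝ)^k * (1/2:ℝ)^k := by
      rw [hnba]; exact hpos
    have hfr := Filter.frequently_lt_of_liminf_lt (hcb α hα) hlt
    obtain ⟨q, hq1, hq2⟩ := Filter.frequently_atTop.mp hfr (k + 1)
    exact ⟨q, hq1, hq2⟩
  choose q hq1 hq2 using hfreq
  have hq1' : ∀ k, 1 ≤ q k := fun k => le_trans (Nat.le_add_left 1 k) (hq1 k)
  set S : ℕ → Finset ℕ := fun k => (Finset.Icc 1 (2^k)).image (fun m => m * q k) with hSdef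
  set b : ℕ → ℝ := fun j => if h : ∃ k, j ∈ S k then (1/2:ℝ)^(Nat.find h) else 0 with hbdef
  have hb0 : ∀ j, 0 ≤ b j := by
    intro j; rw [hbdef]; dsimp only; split <;> positivity
  have hbS : ∀ k j, j ∈ S k → (1/2:ℝ)^k ≤ b j := by
    intro k j hj
    have h : ∃ k, j ∈ S k := ⟨k, hj⟩
    rw [hbdef]; dsimp only; rw [dif_pos h]
    exact pow_le_pow_of_le_one (by norm_num) (by norm_num) (Nat.find_le hj)
  set ψ : ℕ → ℝ := fun j => max ((1/2:ℝ)^j) (b j) with hψdef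
  -- key approximation fact
  have hA : ∀ k j, j ∈ S k → ∃ n : ℤ, |(j:ℝ) * α - n| < (1/2:ℝ)^k := by
    intro k j hj
    obtain ⟨m, hm, rfl⟩ := Finset.mem_image.mp hj
    obtain ⟨hm1, hm2⟩ := Finset.mem_Icc.mp hm
    set r := round ((q k : ℝ) * α) with hr
    refine ⟨(m : ℤ) * r, ?_⟩
    have e1 : ((m * q k : ℕ) : ℝ) * α - (((m : ℤ) * r : ℤ) : ℝ)
        = (m : ℝ) * ((q k : ℝ) * α - (r : ℝ)) := by push_cast; ring
    rw [e1, abs_mul, abs_of_nonneg (by positivity : (0:ℝ) ≤ (m:ℝ))]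
    have hm2' : (m : ℝ) ≤ 2^k := by exact_mod_cast hm2
    have hqk : (1 : ℝ) ≤ (q k : ℝ) := by exact_mod_cast hq1' k
    have habs : (0:ℝ) ≤ |(q k : ℝ) * α - (r : ℝ)| := abs_nonneg _
    have h6 : (m:ℝ) * |(q k : ℝ) * α - (r : ℝ)|
        ≤ (q k : ℝ) * ((m:ℝ) * |(q k : ℝ) * α - (r : ℝ)|) :=
      le_mul_of_one_le_left (by positivity) hqk
    have h2 : (q k : ℝ) * ((m:ℝ) * |(q k : ℝ) * α - (r : ℝ)|) = (m:ℝ) * f (q k) := by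
      rw [hfdef]; dsimp only; rw [hr]; ring
    have h3 : (m:ℝ) * f (q k) ≤ 2^k * f (q k) :=
      mul_le_mul_of_nonneg_right hm2' (hf0 _)
    have h4 : (2:ℝ)^k * f (q k) < 2^k * ((1/2:ℝ)^k * (1/2:ℝ)^k) :=
      mul_lt_mul_of_pos_left (hq2 k) (by positivity)
    have h5 : (2:ℝ)^k * ((1/2:ℝ)^k * (1/2:ℝ)^k) = (1/2:ℝ)^k := by
      rw [← mul_assoc, ← mul_pow]; norm_num
    linarith
  refine ⟨ψ, ?_, ?_, ?_⟩
  · intro j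
    exact lt_max_of_lt_left (by positivity)
  · -- not summable
    intro hsum
    rw [summable_iff_vanishing] at hsum
    obtain ⟨T, hT⟩ := hsum (Set.Iio 1) (Iio_mem_nhds one_pos)
    set k := T.sup id + 1 with hk
    have hdisj : Disjoint (S k) T := by
      rw [Finset.disjoint_left]
      intro j hj hjT
      have h1 : j ≤ T.sup id := Finset.le_sup (f := id) hjT
      obtain ⟨m, hm, rfl⟩ := Finset.mem_image.mp hj
      have hm1 : 1 ≤ m := (Finset.mem_Icc.mp hm).1
      have h2 : q k ≤ m * q k := Nat.le_mul_of_pos_left _ hm1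
      have h3 : k + 1 ≤ q k := hq1 k
      omega
    have hcard : (S k).card = 2^k := by
      rw [hSdef]; dsimp only
      rw [Finset.card_image_of_injective _
        (fun a c h => Nat.eq_of_mul_eq_mul_right (hq1' k) h)]
      simp
    have hge : (1:ℝ) ≤ ∑ j ∈ S k, ψ j := by
      have hsmul : (S k).card • ((1/2:ℝ)^k) ≤ ∑ j ∈ S k, ψ j :=
        Finset.card_nsmul_le_sum _ _ _ (fun j hj =>
          le_trans (hbS k j hj) (le_max_right _ _))
      rw [hcard, nsmul_eq_mul, Nat.cast_pow, Nat.cast_ofNat] at hsmul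
      have hone : (2:ℝ)^k * (1/2:ℝ)^k = 1 := by
        rw [← mul_pow]; norm_num
      linarith
    have := hT (S k) hdisj
    rw [Set.mem_Iio] at this
    linarith
  · -- measure estimate
    set B : ℕ → Set ℝ := fun j => Metric.ball (Int.fract ((j:ℝ) * α)) ((1/2:ℝ)^j) with hBdef
    have hnull : volume (Filter.limsup B Filter.atTop) = 0 := by
      apply measure_limsup_atTop_eq_zero
      have hvol : ∀ j, volume (B j) = ENNReal.ofReal (2 * (1/2:ℝ)^j) := by
        intro j; rw [hBdef]; exact Real.volume_ball _ _
      have hof : ∀ j : ℕ, ENNReal.ofReal (2 * (1/2:ℝ)^j) = 2 * (2⁻¹ : ℝ≥0∞)^j := by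
        intro j
        rw [ENNReal.ofReal_mul (by norm_num : (0:ℝ) ≤ 2),
          ENNReal.ofReal_pow (by norm_num : (0:ℝ) ≤ 1/2), one_div,
          ENNReal.ofReal_inv_of_pos (by norm_num : (0:ℝ) < 2),
          ENNReal.ofReal_ofNat]
      calc ∑' j, volume (B j) = ∑' j : ℕ, 2 * (2⁻¹ : ℝ≥0∞)^j := by
            simp_rw [hvol, hof]
        _ = 2 * (1 - 2⁻¹)⁻¹ := by rw [ENNReal.tsum_mul_left, ENNReal.tsum_geometric]
        _ ≠ ⊤ := by
            have h12 : ((1:ℝ≥0∞) - 2⁻¹) = 2⁻¹ :=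
              ENNReal.sub_eq_of_eq_add (by simp) ENNReal.inv_two_add_inv_two.symm
            rw [h12, inv_inv]
            exact ENNReal.mul_ne_top ENNReal.ofNat_ne_top ENNReal.ofNat_ne_top
    have hsub : W1 (fun j => Int.fract ((j:ℕ) * α)) ψ ⊆
        ({0, 1} : Set ℝ) ∪ Filter.limsup B Filter.atTop := by
      rintro x ⟨hxI, hxf⟩
      by_cases hx0 : x = 0
      · exact Or.inl (Or.inl hx0)
      by_cases hx1 : x = 1
      · exact Or.inl (Or.inr hx1)
      right
      have hx0' : 0 < x := lt_of_le_of_ne hxI.1 (Ne.symm hx0)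
      have hx1' : x < 1 := lt_of_le_of_ne hxI.2 hx1
      set d := min x (1 - x) with hd
      have hdpos : 0 < d := lt_min hx0' (by linarith)
      obtain ⟨K, hK⟩ := exists_pow_lt_of_lt_one (half_pos hdpos)
        (by norm_num : (1/2:ℝ) < 1)
      -- hK : (1/2)^K < d/2
      have hkey : ∀ j : ℕ, |x - Int.fract ((j:ℝ) * α)| < b j →
          j ∈ (Finset.range (K+1)).biUnion S := by
        intro j hj
        have hbpos : 0 < b j := lt_of_le_of_lt (abs_nonneg _) hj
        have hex : ∃ k, j ∈ S k := by
          by_contra h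
          rw [hbdef] at hbpos; dsimp only at hbpos
          rw [dif_neg h] at hbpos; exact lt_irrefl _ hbpos
        have hjS : j ∈ S (Nat.find hex) := Nat.find_spec hex
        set k₀ := Nat.find hex with hk₀
        have hbj : b j = (1/2:ℝ)^k₀ := by
          rw [hbdef]; dsimp only; rw [dif_pos hex]
        obtain ⟨n, hn⟩ := hA k₀ j hjS
        have hpowle : (1/2:ℝ)^k₀ ≤ 1 := pow_le_one₀ (by norm_num) (by norm_num)
        have hfract : Int.fract ((j:ℝ) * α) = Int.fract ((j:ℝ) * α - n) := by
          rw [Int.fract_sub_intCast]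
        set t := (j:ℝ) * α - (n:ℝ) with ht
        have habs : |t| < (1/2:ℝ)^k₀ := hn
        have hcase : d < 2 * (1/2:ℝ)^k₀ := by
          rw [hbj] at hj
          rcases le_or_gt 0 t with h | h
          · have hft : Int.fract t = t :=
              Int.fract_eq_self.mpr ⟨h, lt_of_lt_of_le (lt_of_abs_lt habs) hpowle⟩
            have hxb : x ≤ |x - Int.fract ((j:ℝ) * α)| + t := by
              rw [hfract, hft]
              have := le_abs_self (x - t)
              linarith
            have htlt : t < (1/2:ℝ)^k₀ := lt_of_abs_lt habs
            have : d ≤ x := min_le_left _ _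
            linarith
          · have ht1 : Int.fract t = t + 1 := by
              have h1 : (0:ℝ) ≤ t + 1 := by
                have := neg_lt_of_abs_lt habs; linarith
              have h2 : t + 1 < 1 := by linarith
              have : Int.fract (t + 1) = t + 1 := Int.fract_eq_self.mpr ⟨h1, h2⟩
              calc Int.fract t = Int.fract (t + 1) := by
                    rw [show t + 1 = t + (1:ℤ) by push_cast; ring, Int.fract_add_intCast]
                _ = t + 1 := this
            have hxb : 1 - x ≤ |x - Int.fract ((j:ℝ) * α)| + (-t) := by
              rw [hfract, ht1]
              have := neg_abs_le (x - (t + 1))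
              linarith
            have htlt : -t < (1/2:ℝ)^k₀ := by
              have := neg_lt_of_abs_lt habs; linarith
            have : d ≤ 1 - x := min_le_right _ _
            linarith
        have hk₀K : k₀ ≤ K := by
          by_contra h
          push_neg at h
          have : (1/2:ℝ)^k₀ ≤ (1/2:ℝ)^K :=
            pow_le_pow_of_le_one (by norm_num) (by norm_num) (le_of_lt h)
          linarith
        exact Finset.mem_biUnion.mpr ⟨k₀, Finset.mem_range.mpr (Nat.lt_succ_of_le hk₀K), hjS⟩
      have hfin : {j : ℕ | |x - Int.fract ((j:ℝ) * α)| < b j}.Finite :=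
        Set.Finite.subset ((Finset.range (K+1)).biUnion S).finite_toSet
          (fun j hj => Finset.mem_coe.mpr (hkey j hj))
      have hev : ∀ᶠ (j : ℕ) in Filter.atTop, ¬ |x - Int.fract ((j:ℝ) * α)| < b j := by
        have := hfin.eventually_cofinite_notMem
        rwa [Nat.cofinite_eq_atTop] at this
      have hfreq' : ∃ᶠ (j : ℕ) in Filter.atTop, |x - Int.fract ((j:ℝ) * α)| < (1/2:ℝ)^j := by
        refine (hxf.and_eventually hev).mono ?_
        rintro j ⟨hj, hnj⟩
        rcases lt_max_iff.mp hj with h | h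
        · exact h
        · exact absurd h hnj
      rw [mem_limsup_iff_frequently_mem]
      refine hfreq'.mono fun j hj => ?_
      show x ∈ Metric.ball (Int.fract ((j:ℝ) * α)) ((1/2:ℝ)^j)
      exact Metric.mem_ball.mpr (by rwa [Real.dist_eq])
    have hle : volume (W1 (fun j => Int.fract ((j:ℕ) * α)) ψ) ≤
        volume (({0, 1} : Set ℝ)) + volume (Filter.limsup B Filter.atTop) :=
      le_trans (measure_mono hsub) (measure_union_le _ _)
    have h01 : volume (({0, 1} : Set ℝ)) = 0 :=
      ((Set.countable_singleton (1:ℝ)).insert 0).measure_zero _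
    rw [h01, hnull, add_zero] at hle
    calc volume (W1 (fun j => Int.fract ((j:ℕ) * α)) ψ) ≤ 0 := hle
      _ < 1 := by norm_num
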